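/- Let U ⊆ ℂ be open and let g : U → ℂ be holomorphic with g and g' nowhere zero on U. Set h_S := (i/2)·(g')²/g³. Then on U one has the identity ( g³·h_S'/(2g') )' = (i/2)·( g''' − 3·g'·g''/g + (3/2)·(g')³/g² ). (This identifies the infinitesimal deformation ġ_S of the Weierstrass data associated to the Shiffman function, Corollary 6.14 of the paper.) -/

import Mathlib

open Complex

/-- For the choice `h_S = (i/2)(g')²/g³` corresponding to the Shiffman function, the
infinitesimal deformation `ġ(h_S) = (g³ h_S'/(2g'))'` equals
`(i/2)(g''' − 3g'g''/g + (3/2)(g')³/g²)`. -/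
theorem shiffman_infinitesimal_deformation_of_gauss_map
    (U : Set ℂ) (hU : IsOpen U) (g : ℂ → ℂ)
    (hg : DifferentiableOn ℂ g U)
    (hg0 : ∀ z ∈ U, g z ≠ 0) (hg'0 : ∀ z ∈ U, deriv g z ≠ 0) :
    ∀ z ∈ U,
      deriv (fun w =>
          (g w) ^ 3 * deriv (fun ζ => (Complex.I / 2) * (deriv g ζ) ^ 2 / (g ζ) ^ 3) w
            / (2 * deriv g w)) z
        = (Complex.I / 2) * (deriv (deriv (deriv g)) z
            - 3 * deriv g z * deriv (deriv g) z / g z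
            + (3 / 2) * (deriv g z) ^ 3 / (g z) ^ 2) := by
  intro z hz
  have hga : AnalyticOnNhd ℂ g U := hg.analyticOnNhd hU
  have hg1a : AnalyticOnNhd ℂ (deriv g) U := hga.deriv
  have hg2a : AnalyticOnNhd ℂ (deriv (deriv g)) U := hg1a.deriv
  have hdg : ∀ w ∈ U, HasDerivAt g (deriv g w) w := fun w hw =>
    ((hga w hw).differentiableAt).hasDerivAt
  have hdg1 : ∀ w ∈ U, HasDerivAt (deriv g) (deriv (deriv g) w) w := fun w hw =>
    ((hg1a w hw).differentiableAt).hasDerivAt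
  have hdg2 : ∀ w ∈ U, HasDerivAt (deriv (deriv g)) (deriv (deriv (deriv g)) w) w := fun w hw =>
    ((hg2a w hw).differentiableAt).hasDerivAt
  -- derivative of the inner function on U
  have hinner : ∀ w ∈ U,
      deriv (fun ζ => (Complex.I / 2) * (deriv g ζ) ^ 2 / (g ζ) ^ 3) w
        = ((Complex.I / 2) * (2 * deriv g w ^ 1 * deriv (deriv g) w) * (g w) ^ 3
            - (Complex.I / 2) * (deriv g w) ^ 2 * (3 * g w ^ 2 * deriv g w)) / ((g w) ^ 3) ^ 2 := by
    intro w hw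
    have hu : HasDerivAt (fun ζ => (Complex.I / 2) * (deriv g ζ) ^ 2)
        ((Complex.I / 2) * (2 * deriv g w ^ 1 * deriv (deriv g) w)) w :=
      ((hdg1 w hw).pow 2).const_mul _
    have hv : HasDerivAt (fun ζ => (g ζ) ^ 3) (3 * g w ^ 2 * deriv g w) w := by
      have := (hdg w hw).pow 3; simp at this; exact this
    have hv0 : (g w) ^ 3 ≠ 0 := pow_ne_zero _ (hg0 w hw)
    exact (hu.div hv hv0).deriv
  -- the outer function agrees on U with a simpler expression
  have hEq : Set.EqOn (fun w =>
        (g w) ^ 3 * deriv (fun ζ => (Complex.I / 2) * (deriv g ζ) ^ 2 / (g ζ) ^ 3) w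
          / (2 * deriv g w))
      (fun w => (Complex.I / 4) * (2 * deriv (deriv g) w * g w - 3 * (deriv g w) ^ 2) / g w) U := by
    intro w hw
    simp only [hinner w hw]
    have h0 : g w ≠ 0 := hg0 w hw
    have h1 : deriv g w ≠ 0 := hg'0 w hw
    field_simp
    ring
  have hmem : U ∈ nhds z := hU.mem_nhds hz
  have hEqF : (fun w =>
        (g w) ^ 3 * deriv (fun ζ => (Complex.I / 2) * (deriv g ζ) ^ 2 / (g ζ) ^ 3) w
          / (2 * deriv g w))
      =ᶠ[nhds z]
      (fun w => (Complex.I / 4) * (2 * deriv (deriv g) w * g w - 3 * (deriv g w) ^ 2) / g w) :=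
    Filter.eventuallyEq_of_mem hmem hEq
  rw [hEqF.deriv_eq]
  -- compute the derivative of the simpler expression at z
  have hu : HasDerivAt (fun w => (Complex.I / 4) * (2 * deriv (deriv g) w * g w - 3 * (deriv g w) ^ 2))
      ((Complex.I / 4) * (2 * ((deriv (deriv (deriv g)) z) * g z + deriv (deriv g) z * deriv g z)
        - 3 * (2 * deriv g z ^ 1 * deriv (deriv g) z))) z := by
    have h1 : HasDerivAt (fun w => 2 * deriv (deriv g) w * g w)
        (2 * (deriv (deriv (deriv g)) z * g z + deriv (deriv g) z * deriv g z)) z := by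
      have := (((hdg2 z hz).mul (hdg z hz))).const_mul (2 : ℂ)
      rw [show (fun w => 2 * deriv (deriv g) w * g w) = fun y => 2 * (deriv (deriv g) * g) y from by
        ext w; simp only [Pi.mul_apply]; ring]
      exact this
    have h2 : HasDerivAt (fun w => 3 * (deriv g w) ^ 2)
        (3 * (2 * deriv g z ^ 1 * deriv (deriv g) z)) z := ((hdg1 z hz).pow 2).const_mul 3
    exact (h1.sub h2).const_mul _
  have hv : HasDerivAt g (deriv g z) z := hdg z hz
  have hD := (hu.fun_div hv (hg0 z hz)).deriv
  rw [hD]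
  have h0 : g z ≠ 0 := hg0 z hz
  rw [div_eq_iff (pow_ne_zero 2 h0)]
  field_simp [h0]
  ring
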